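/- Let G be a finite abelian group, let r ≥ 2 be a multiple of exp(G), and let n ≥ 1. Then there exists an r-graph H on n vertices such that: (i) every set of s_r(G) vertices of H contains an edge of H (so α(H) < s_r(G)), and (ii) every (r−1)-element subset of V(H) is contained in at most ⌈n/|G|⌉ edges of H, i.e., Δ_{r-1}(H) ≤ ⌈n/|G|⌉. -/

import Mathlib

/-- `s_r(G)`: the smallest `s` such that every multiset of `s` elements of `G`
has a zero-sum sub-multiset of size `r`. -/
noncomputable def egzConst (G : Type*) [AddCommGroup G] [Fintype G] (r : ℕ) : ℕ :=
  sInf {s | ∀ S : Multiset G, Multiset.card S = s →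
    ∃ T ≤ S, Multiset.card T = r ∧ T.sum = 0}

private lemma exists_preimage_of_le_map {α β : Type*} [DecidableEq β] (f : α → β) :
    ∀ (s : Multiset α) (T : Multiset β), T ≤ s.map f → ∃ u ≤ s, u.map f = T := by
  intro s
  induction s using Multiset.induction_on with
  | empty =>
    intro T hT
    simp only [Multiset.map_zero, Multiset.le_zero] at hT
    exact ⟨0, le_refl _, by simp [hT]⟩
  | cons a s ih =>
    intro T hT
    rw [Multiset.map_cons] at hT
    by_cases hfa : f a ∈ T
    · have hTe : f a ::ₘ T.erase (f a) = T := Multiset.cons_erase hfa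
      have h1 : T.erase (f a) ≤ s.map f := by
        rw [← Multiset.cons_le_cons_iff (f a), hTe]; exact hT
      obtain ⟨u, hu, hum⟩ := ih _ h1
      exact ⟨a ::ₘ u, Multiset.cons_le_cons a hu, by rw [Multiset.map_cons, hum, hTe]⟩
    · have h1 : T ≤ s.map f := (Multiset.le_cons_of_notMem hfa).mp hT
      obtain ⟨u, hu, hum⟩ := ih _ h1
      exact ⟨u, le_trans hu (Multiset.le_cons_self _ _), hum⟩

/-- Let `G` be a finite abelian group, `r ≥ 2` a multiple of `exp(G)`, and `n ≥ 1`.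
Then there is an `r`-graph `H` on `n` vertices such that (i) every set of `s_r(G)`
vertices contains an edge of `H`, and (ii) every `(r−1)`-element vertex subset is
contained in at most `⌈n / |G|⌉` edges of `H`. -/
theorem codegree_construction (G : Type*) [AddCommGroup G] [Fintype G]
    (r : ℕ) (hr : 2 ≤ r) (hdvd : AddMonoid.exponent G ∣ r) (n : ℕ) (hn : 1 ≤ n) :
    ∃ H : Finset (Finset (Fin n)),
      (∀ e ∈ H, e.card = r) ∧
      (∀ S : Finset (Fin n), S.card = egzConst G r → ∃ e ∈ H, e ⊆ S) ∧
      (∀ A : Finset (Fin n), A.card = r - 1 →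
        (H.filter (fun e => A ⊆ e)).card ≤
          (n + Fintype.card G - 1) / Fintype.card G) := by
  classical
  set m := Fintype.card G with hm
  have hm0 : 0 < m := Fintype.card_pos
  set eqv : G ≃ Fin m := Fintype.equivFin G with heqv
  set f : Fin n → G := fun i => eqv.symm ⟨(i : ℕ) % m, Nat.mod_lt _ hm0⟩ with hf
  set H : Finset (Finset (Fin n)) :=
    (Finset.powersetCard r Finset.univ).filter (fun e => ∑ v ∈ e, f v = 0) with hH
  have hcard : ∀ e ∈ H, e.card = r := by
    intro e he
    have := (Finset.mem_filter.mp he).1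
    exact (Finset.mem_powersetCard_univ).mp this
  -- key: the defining set of egzConst is nonempty, so egzConst is in the set
  have hegz : ∀ S : Multiset G, Multiset.card S = egzConst G r →
      ∃ T ≤ S, Multiset.card T = r ∧ T.sum = 0 := by
    have hne : (m * (r - 1) + 1) ∈ {s | ∀ S : Multiset G, Multiset.card S = s →
        ∃ T ≤ S, Multiset.card T = r ∧ T.sum = 0} := by
      intro S hS
      -- pigeonhole: some element appears at least r times
      have : ∃ g : G, r ≤ S.count g := by
        by_contra hcon
        push_neg at hcon
        have hle : ∀ g ∈ S.toFinset, S.count g ≤ r - 1 := fun g _ =>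
          Nat.le_sub_one_of_lt (hcon g)
        have h1 : Multiset.card S ≤ S.toFinset.card * (r - 1) := by
          rw [← Multiset.toFinset_sum_count_eq]
          calc ∑ g ∈ S.toFinset, S.count g ≤ ∑ _g ∈ S.toFinset, (r - 1) :=
                Finset.sum_le_sum hle
            _ = S.toFinset.card * (r - 1) := by rw [Finset.sum_const, smul_eq_mul]
        have h2 : S.toFinset.card ≤ m := by
          simpa [hm] using Finset.card_le_card (Finset.subset_univ S.toFinset)
        have : Multiset.card S ≤ m * (r - 1) :=
          h1.trans (Nat.mul_le_mul_right _ h2)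
        omega
      obtain ⟨g, hg⟩ := this
      refine ⟨Multiset.replicate r g, ?_, by simp, ?_⟩
      · rw [Multiset.le_iff_count]
        intro a
        by_cases hag : a = g
        · simpa [hag] using hg
        · rw [Multiset.count_replicate, if_neg (Ne.symm hag)]; exact Nat.zero_le _
      · rw [Multiset.sum_replicate]
        have hord : addOrderOf g ∣ r :=
          dvd_trans (AddMonoid.addOrder_dvd_exponent g) hdvd
        exact addOrderOf_dvd_iff_nsmul_eq_zero.mp hord
    exact Nat.sInf_mem ⟨_, hne⟩
  refine ⟨H, hcard, ?_, ?_⟩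
  · -- every set of size egzConst contains an edge
    intro S hS
    have hM : Multiset.card (S.val.map f) = egzConst G r := by
      rw [Multiset.card_map]; exact hS
    obtain ⟨T, hTle, hTcard, hTsum⟩ := hegz _ hM
    obtain ⟨u, hule, hum⟩ := exists_preimage_of_le_map f S.val T hTle
    have hnd : u.Nodup := Multiset.nodup_of_le hule S.nodup
    refine ⟨⟨u, hnd⟩, ?_, ?_⟩
    · rw [hH, Finset.mem_filter, Finset.mem_powersetCard_univ]
      constructor
      · show Multiset.card u = r
        have : Multiset.card (u.map f) = r := by rw [hum]; exact hTcard
        simpa using this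
      · show ∑ v ∈ (⟨u, hnd⟩ : Finset (Fin n)), f v = 0
        rw [Finset.sum_eq_multiset_sum]
        show (u.map f).sum = 0
        rw [hum]; exact hTsum
    · intro x hx
      exact Multiset.subset_of_le hule hx
  · -- codegree bound
    intro A hA
    set g : G := -∑ a ∈ A, f a with hg
    set fib : Finset (Fin n) := Finset.univ.filter (fun v => f v = g) with hfib
    have hsub : H.filter (fun e => A ⊆ e) ⊆ fib.image (fun v => insert v A) := by
      intro e he
      rw [Finset.mem_filter] at he
      obtain ⟨heH, hAe⟩ := he
      have hecard : e.card = r := hcard e heH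
      have hd : (e \ A).card = 1 := by
        rw [Finset.card_sdiff_of_subset hAe, hecard, hA]; omega
      obtain ⟨v, hv⟩ := Finset.card_eq_one.mp hd
      have hvA : v ∉ A := by
        have : v ∈ e \ A := hv ▸ Finset.mem_singleton_self v
        exact (Finset.mem_sdiff.mp this).2
      have hins : e = insert v A := by
        have : A ∪ (e \ A) = e := Finset.union_sdiff_of_subset hAe
        rw [hv] at this
        rw [← this, Finset.union_comm]
        rw [Finset.insert_eq]
      have hsum : ∑ x ∈ e, f x = 0 := (Finset.mem_filter.mp heH).2
      have hfv : f v = g := by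
        rw [hins, Finset.sum_insert hvA] at hsum
        rw [hg]
        linear_combination (norm := abel) hsum
      exact Finset.mem_image.mpr ⟨v, Finset.mem_filter.mpr ⟨Finset.mem_univ v, hfv⟩,
        hins.symm⟩
    have hfibcard : fib.card ≤ (n + m - 1) / m := by
      have : fib.card ≤ (Finset.range ((n + m - 1) / m)).card := by
        refine Finset.card_le_card_of_injOn (fun i => (i : ℕ) / m) ?_ ?_
        · intro i hi
          rw [Finset.mem_coe, Finset.mem_range]
          show (i : ℕ) / m < (n + m - 1) / m
          have hi1 : (i : ℕ) ≤ n - 1 := Nat.le_sub_one_of_lt i.isLt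
          have h2 : (i : ℕ) / m ≤ (n - 1) / m := Nat.div_le_div_right hi1
          have h3 : (n + m - 1) / m = (n - 1) / m + 1 := by
            have : n + m - 1 = (n - 1) + m := by omega
            rw [this, Nat.add_div_right _ hm0]
          omega
        · intro i hi j hj hij
          have hij' : m * ((i : ℕ) / m) = m * ((j : ℕ) / m) := by
            have h : (i : ℕ) / m = (j : ℕ) / m := hij
            rw [h]
          rw [hfib, Finset.mem_coe, Finset.mem_filter] at hi hj
          have hi2 := hi.2
          have hj2 := hj.2
          rw [hf] at hi2 hj2
          have hmod : (i : ℕ) % m = (j : ℕ) % m := by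
            have := hi2.trans hj2.symm
            have := eqv.symm.injective this
            exact congrArg Fin.val this
          have : (i : ℕ) = (j : ℕ) := by
            have h1 := Nat.div_add_mod (i : ℕ) m
            have h2 := Nat.div_add_mod (j : ℕ) m
            omega
          exact Fin.ext this
      simpa using this
    calc (H.filter (fun e => A ⊆ e)).card
        ≤ (fib.image (fun v => insert v A)).card := Finset.card_le_card hsub
      _ ≤ fib.card := Finset.card_image_le
      _ ≤ (n + m - 1) / m := hfibcard
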